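/- arXiv:1604.05645 — 4 statements merged into one kernel-verified Lean document; each statement's English description precedes it below -/
import Mathlib

section
/- Let n ≥ 1 and let φ : ℝⁿ → ℝ be continuous and ℤⁿ-periodic (φ(x + m) = φ(x) for all m ∈ ℤⁿ). Define φ^c : ℝⁿ → ℝ by φ^c(y) = sup_{x ∈ ℝⁿ} (−(1/2) inf_{m ∈ ℤⁿ} |x − y − m|² − φ(x)), and let Φ(x) = φ(x) + |x|²/2. Then the Legendre transform Φ*(y) = sup_{x ∈ ℝⁿ} (⟨x, y⟩ − Φ(x)) satisfies Φ*(y) = φ^c(y) + |y|²/2 for every y ∈ ℝⁿ. -/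
open Real

noncomputable section

/-- Squared Euclidean norm on `ℝⁿ`. -/
def sqnorm {n : ℕ} (v : Fin n → ℝ) : ℝ := ∑ i, (v i)^2

/-- Euclidean inner product on `ℝⁿ`. -/
def euclInner {n : ℕ} (v w : Fin n → ℝ) : ℝ := ∑ i, v i * w i

/-- A lattice point of `ℤⁿ` viewed in `ℝⁿ`. -/
def zvec {n : ℕ} (m : Fin n → ℤ) : Fin n → ℝ := fun i => (m i : ℝ)

lemma sqnorm_nonneg {n : ℕ} (v : Fin n → ℝ) : 0 ≤ sqnorm v :=
  Finset.sum_nonneg fun i _ => sq_nonneg _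

lemma sqnorm_sub {n : ℕ} (x y : Fin n → ℝ) :
    sqnorm (x - y) = sqnorm x - 2 * euclInner x y + sqnorm y := by
  simp only [sqnorm, euclInner, Pi.sub_apply, sub_sq, Finset.sum_add_distrib,
    Finset.sum_sub_distrib, Finset.mul_sum]
  ring

/-- For a continuous `ℤⁿ`-periodic function `φ` on `ℝⁿ`, the Legendre
transform of `Φ(x) = φ(x) + |x|²/2` is `Φ*(y) = φ^c(y) + |y|²/2`, where `φ^c` is the
`c`-transform of `φ` for the cost `c(x,y) = (1/2) inf_{m ∈ ℤⁿ} |x - y - m|²`. -/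
theorem statement5 (n : ℕ) (hn : 1 ≤ n) (φ : (Fin n → ℝ) → ℝ) (hφ : Continuous φ)
    (hper : ∀ (x : Fin n → ℝ) (m : Fin n → ℤ), φ (x + zvec m) = φ x) :
    ∀ y : Fin n → ℝ,
      (⨆ x : Fin n → ℝ, (euclInner x y - (φ x + sqnorm x / 2))) =
        (⨆ x : Fin n → ℝ,
          (-(1 / 2) * (⨅ m : Fin n → ℤ, sqnorm (x - y - zvec m)) - φ x)) + sqnorm y / 2 := by
  -- φ is bounded
  obtain ⟨lo, hlo⟩ : ∃ lo, ∀ x, lo ≤ φ x := by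
    have hcube : IsCompact (Set.Icc (0 : Fin n → ℝ) 1) := isCompact_Icc
    obtain ⟨lo, hloub⟩ := hcube.bddBelow_image hφ.continuousOn
    refine ⟨lo, fun x => ?_⟩
    set m : Fin n → ℤ := fun i => ⌊x i⌋ with hm
    have hmem : x - zvec m ∈ Set.Icc (0 : Fin n → ℝ) 1 := by
      refine ⟨fun i => ?_, fun i => ?_⟩
      · simpa [zvec, hm, Int.self_sub_floor] using Int.fract_nonneg (x i)
      · simpa [zvec, hm, Int.self_sub_floor] using (Int.fract_lt_one (x i)).le
    have hx : φ x = φ (x - zvec m) := by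
      have := hper (x - zvec m) m
      rwa [sub_add_cancel] at this
      done
    rw [hx]
    exact hloub (Set.mem_image_of_mem φ hmem)
  intro y
  set g : (Fin n → ℝ) → ℝ := fun x => -(1 / 2) * sqnorm (x - y) - φ x with hg
  set h : (Fin n → ℝ) → ℝ :=
    fun x => -(1 / 2) * (⨅ m : Fin n → ℤ, sqnorm (x - y - zvec m)) - φ x with hh
  have hIbdd : ∀ x : Fin n → ℝ,
      BddBelow (Set.range fun m : Fin n → ℤ => sqnorm (x - y - zvec m)) :=
    fun x => ⟨0, by rintro _ ⟨m, rfl⟩; exact sqnorm_nonneg _⟩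
  have hI0 : ∀ x : Fin n → ℝ, 0 ≤ ⨅ m : Fin n → ℤ, sqnorm (x - y - zvec m) :=
    fun x => le_ciInf fun m => sqnorm_nonneg _
  have hgbdd : BddAbove (Set.range g) := by
    refine ⟨-lo, ?_⟩
    rintro _ ⟨x, rfl⟩
    have h1 : -(1 / 2) * sqnorm (x - y) ≤ 0 := by nlinarith [sqnorm_nonneg (x - y)]
    have := hlo x
    simp only [hg]
    linarith
  have hhbdd : BddAbove (Set.range h) := by
    refine ⟨-lo, ?_⟩
    rintro _ ⟨x, rfl⟩
    have h1 : -(1 / 2) * (⨅ m : Fin n → ℤ, sqnorm (x - y - zvec m)) ≤ 0 := by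
      nlinarith [hI0 x]
    have := hlo x
    simp only [hh]
    linarith
  have hkey : (⨆ x, g x) = ⨆ x, h x := by
    apply le_antisymm
    · refine ciSup_le fun x => ?_
      refine le_trans ?_ (le_ciSup hhbdd x)
      have : (⨅ m : Fin n → ℤ, sqnorm (x - y - zvec m)) ≤ sqnorm (x - y) := by
        have h0 : zvec (0 : Fin n → ℤ) = 0 := by funext i; simp [zvec]
        have := ciInf_le (hIbdd x) (0 : Fin n → ℤ)
        simpa [h0] using this
      simp only [hg, hh]
      nlinarith
    · refine ciSup_le fun x => ?_
      have hmain : ∀ m : Fin n → ℤ,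
          -2 * (⨆ x, g x) - 2 * φ x ≤ sqnorm (x - y - zvec m) := by
        intro m
        have hgle : g (x - zvec m) ≤ ⨆ x, g x := le_ciSup hgbdd _
        have hphi : φ (x - zvec m) = φ x := by
          have := hper (x - zvec m) m
          rw [sub_add_cancel] at this
          exact this.symm
        have harg : x - zvec m - y = x - y - zvec m := by ring
        rw [hg] at hgle
        simp only at hgle
        rw [harg, hphi] at hgle
        nlinarith
      have : -2 * (⨆ x, g x) - 2 * φ x ≤ ⨅ m : Fin n → ℤ, sqnorm (x - y - zvec m) :=
        le_ciInf hmain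
      simp only [hh]
      nlinarith
  have heq : ∀ x : Fin n → ℝ,
      euclInner x y - (φ x + sqnorm x / 2) = g x + sqnorm y / 2 := by
    intro x
    simp only [hg, sqnorm_sub]
    ring
  calc (⨆ x : Fin n → ℝ, (euclInner x y - (φ x + sqnorm x / 2)))
      = ⨆ x, (g x + sqnorm y / 2) := by exact iSup_congr heq
    _ = (⨆ x, g x) + sqnorm y / 2 := by
        exact (ciSup_add hgbdd _).symm
    _ = (⨆ x, h x) + sqnorm y / 2 := by rw [hkey]
end
end

section
/- Let n ≥ 1, X = ℝⁿ/ℤⁿ, k ≥ 1 an integer, N = kⁿ, and let H^{(N)}(x₁,…,x_N) = −(1/k) log perm(Ψ_{p_i}^{(N)}(x_j))_{i,j=1}^N. Then for all x, y ∈ X^N, |H^{(N)}(x)/N − H^{(N)}(y)/N| ≤ diam(X) · d^{(N)}(x, y), where d^{(N)}(x,y) = (1/N) min_σ Σ_i d(x_i, y_{σ(i)}) (minimum over permutations σ of {1,…,N}). In particular the family {H^{(N)}/N : k ∈ ℕ} is uniformly equicontinuous with respect to the matching metrics d^{(N)}. -/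
open MeasureTheory Filter Topology Real
open scoped ENNReal NNReal

noncomputable section

instance fact_zero_lt_one' : Fact ((0:ℝ) < 1) := ⟨one_pos⟩

/-- The `n`-dimensional torus `ℝⁿ/ℤⁿ`. -/
abbrev Torus (n : ℕ) : Type := Fin n → AddCircle (1 : ℝ)

/-- Section of the quotient map, with values in `[0,1)ⁿ`. -/
def torusSec {n : ℕ} (x : Torus n) : Fin n → ℝ := fun i => (AddCircle.equivIco 1 0 (x i) : ℝ)

/-- The quotient metric `d(πx, πy) = inf_{m ∈ ℤⁿ} |x - y - m|` on the torus. -/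
def tdist {n : ℕ} (x y : Torus n) : ℝ :=
  ⨅ m : Fin n → ℤ, Real.sqrt (sqnorm (torusSec x - torusSec y - zvec m))

/-- The diameter of the torus for the quotient metric. -/
def torusDiam (n : ℕ) : ℝ := ⨆ x : Torus n, ⨆ y : Torus n, tdist x y

/-- The permanent of a matrix `A`, `perm A = ∑_σ ∏_i A i (σ i)`. -/
def perm {ι : Type*} [Fintype ι] [DecidableEq ι] (A : ι → ι → ℝ) : ℝ :=
  ∑ σ : Equiv.Perm ι, ∏ i, A i (σ i)

/-- The wave function `Ψ_p^{(N)}` lifted to `ℝⁿ`. -/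
def wave {n : ℕ} (k : ℕ) (p : Fin n → ℝ) (x : Fin n → ℝ) : ℝ :=
  ∑' m : Fin n → ℤ, Real.exp (-(k : ℝ) * sqnorm (x - p - zvec m) / 2)

/-- The lattice point of `(1/k)ℤⁿ/ℤⁿ` indexed by `p : Fin n → Fin k`. -/
def latticePt {n : ℕ} (k : ℕ) (p : Fin n → Fin k) : Fin n → ℝ := fun i => (p i : ℝ) / k

/-- The Hamiltonian `H^{(N)}(x) = -(1/k) log perm(Ψ_{p_i}^{(N)}(x_j))`, `N = kⁿ`. -/
def Ham (n k : ℕ) (x : (Fin n → Fin k) → Torus n) : ℝ :=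
  -(1 / (k : ℝ)) * Real.log (perm fun p q => wave k (latticePt k p) (torusSec (x q)))

/-- The matching distance `d^{(N)}(x,y) = (1/N) inf_σ Σ_i d(x_i, y_{σ(i)})` on `X^N`. -/
def matchDistT {n : ℕ} {ι : Type*} [Fintype ι] (x y : ι → Torus n) : ℝ :=
  (Fintype.card ι : ℝ)⁻¹ * ⨅ σ : Equiv.Perm ι, ∑ i, tdist (x i) (y (σ i))

namespace St10

/-- Master summability lemma. -/
lemma summable_master (j : ℕ) {a : ℝ} (ha : 0 < a) (B : ℝ) :
    Summable (fun m : ℤ => |(m:ℝ)|^j * Real.exp (-a * (m:ℝ)^2 + B * |(m:ℝ)|)) := by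
  have h := summable_pow_mul_jacobiTheta₂_term_bound (B/(2*π)) (T := a/π)
    (by positivity) j
  refine h.congr fun m => ?_
  have hπ : (π:ℝ) ≠ 0 := pi_ne_zero
  push_cast
  congr 1
  have : -π * (a / π * (m:ℝ) ^ 2 - 2 * (B / (2 * π)) * |(m:ℝ)|) =
      -a * (m:ℝ)^2 + B * |(m:ℝ)| := by field_simp; ring
  rw [this]

variable {κ : ℝ}

/-- 1D Gaussian periodization. -/
def g (κ c : ℝ) : ℝ := ∑' m : ℤ, Real.exp (-κ * (c - m)^2 / 2)

lemma term_le (hκ : 0 < κ) (c : ℝ) (m : ℤ) :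
    Real.exp (-κ * (c - m)^2 / 2) ≤ Real.exp (-(κ/2) * (m:ℝ)^2 + (κ * |c|) * |(m:ℝ)|) := by
  apply Real.exp_le_exp.2
  have h1 : (m:ℝ)^2 - 2 * (|c| * |(m:ℝ)|) ≤ (c - m)^2 := by
    have : (c - m)^2 = (m:ℝ)^2 - 2*(c*m) + c^2 := by ring
    rw [this]
    have h2 : c * m ≤ |c| * |(m:ℝ)| := le_trans (le_abs_self _) (by rw [abs_mul])
    nlinarith [sq_nonneg c]
  nlinarith

lemma summable_g (hκ : 0 < κ) (c : ℝ) :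
    Summable (fun m : ℤ => Real.exp (-κ * (c - m)^2 / 2)) := by
  refine Summable.of_nonneg_of_le (fun m => (Real.exp_pos _).le) (term_le hκ c) ?_
  have := summable_master 0 (half_pos hκ) (κ * |c|)
  simpa using this

lemma g_pos (hκ : 0 < κ) (c : ℝ) : 0 < g κ c :=
  Summable.tsum_pos (summable_g hκ c) (fun m => (Real.exp_pos _).le) 0 (Real.exp_pos _)

/-- numerator series -/
def gd (κ c : ℝ) : ℝ := ∑' m : ℤ, (c - m) * Real.exp (-κ * (c - m)^2 / 2)

lemma summable_gd_aux (hκ : 0 < κ) (c b : ℝ) (hb : 0 ≤ b) :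
    Summable (fun m : ℤ => (|c - m| + b) * Real.exp (-κ * (c - m)^2 / 2)) := by
  have h0 : Summable (fun m : ℤ => (|(m:ℝ)| + (|c| + |b|)) *
      Real.exp (-(κ/2) * (m:ℝ)^2 + (κ * |c|) * |(m:ℝ)|)) := by
    have h1 := summable_master 1 (half_pos hκ) (κ * |c|)
    have h2 := (summable_master 0 (half_pos hκ) (κ * |c|)).mul_left (|c| + |b|)
    refine (h1.add h2).congr fun m => ?_
    ring
  refine Summable.of_nonneg_of_le (fun m => ?_) (fun m => ?_) h0
  · positivity
  · have hb2 : (|c - m| + b) ≤ |(m:ℝ)| + (|c| + |b|) := by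
      have h3 : |c - (m:ℝ)| ≤ |c| + |(m:ℝ)| := abs_sub _ _
      have hb' : b ≤ |b| := le_abs_self b
      linarith
    exact mul_le_mul hb2 (term_le hκ c m) (Real.exp_pos _).le (by positivity)

lemma summable_gd (hκ : 0 < κ) (c : ℝ) :
    Summable (fun m : ℤ => (c - m) * Real.exp (-κ * (c - m)^2 / 2)) := by
  refine Summable.of_norm ?_
  refine Summable.of_nonneg_of_le (fun m => norm_nonneg _) (fun m => ?_) (summable_gd_aux hκ c 0 le_rfl)
  rw [Real.norm_eq_abs, abs_mul, abs_of_pos (Real.exp_pos _), add_zero]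

end St10

namespace St10
variable {κ : ℝ}

lemma summable_gd_aux2 (hκ : 0 < κ) (c b β : ℝ) (hb : 0 ≤ b) (hβ : 0 ≤ β) :
    Summable (fun m : ℤ => (|c - m| + b) * Real.exp (-κ * (c - m)^2 / 2 + β * |c - m|)) := by
  have h0 : Summable (fun m : ℤ => (Real.exp (β * |c|) * (|c| + |b|)) *
        (|(m:ℝ)|^0 * Real.exp (-(κ/2) * (m:ℝ)^2 + (κ * |c| + β) * |(m:ℝ)|))
      + Real.exp (β * |c|) *
        (|(m:ℝ)|^1 * Real.exp (-(κ/2) * (m:ℝ)^2 + (κ * |c| + β) * |(m:ℝ)|))) :=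
    ((summable_master 0 (half_pos hκ) _).mul_left _).add
      ((summable_master 1 (half_pos hκ) _).mul_left _)
  refine Summable.of_nonneg_of_le (fun m => by positivity) (fun m => ?_) h0
  have habs : |c - (m:ℝ)| ≤ |c| + |(m:ℝ)| := abs_sub _ _
  have hsq : (m:ℝ)^2 - 2 * (|c| * |(m:ℝ)|) ≤ (c - m)^2 := by
    have h2 : c * m ≤ |c| * |(m:ℝ)| := le_trans (le_abs_self _) (by rw [abs_mul])
    nlinarith [sq_nonneg c]
  have hexp : Real.exp (-κ * (c - m)^2 / 2 + β * |c - m|) ≤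
      Real.exp (β * |c|) * Real.exp (-(κ/2) * (m:ℝ)^2 + (κ * |c| + β) * |(m:ℝ)|) := by
    rw [← Real.exp_add]
    apply Real.exp_le_exp.2
    nlinarith [abs_nonneg ((m:ℝ)), abs_nonneg c]
  calc (|c - m| + b) * Real.exp (-κ * (c - m)^2 / 2 + β * |c - m|)
      ≤ ((|c| + |(m:ℝ)|) + |b|) * (Real.exp (β * |c|) *
        Real.exp (-(κ/2) * (m:ℝ)^2 + (κ * |c| + β) * |(m:ℝ)|)) := by
        apply mul_le_mul _ hexp (Real.exp_pos _).le (by positivity)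
        have := le_abs_self b; linarith
    _ = _ := by push_cast; ring

lemma hasDerivAt_g (hκ : 0 < κ) (c : ℝ) : HasDerivAt (g κ) (-κ * gd κ c) c := by
  have hterm : ∀ (m : ℤ) (y : ℝ), y ∈ Metric.ball c 1 →
      HasDerivAt (fun z => Real.exp (-κ * (z - m)^2 / 2))
        (Real.exp (-κ * (y - m)^2 / 2) * (-κ * (y - m))) y := by
    intro m y _
    have h1 : HasDerivAt (fun z : ℝ => -κ * (z - (m:ℝ))^2 / 2) (-κ * (y - m)) y := by
      have h2 := (((hasDerivAt_id y).sub_const (m:ℝ)).pow 2).const_mul (-κ/2)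
      convert h2 using 1
      · rfl
      · rfl
      · funext z; simp only [id_eq, Pi.pow_apply]; ring
      · simp only [id_eq]; push_cast; ring
    exact h1.exp
  have hbound : ∀ (m : ℤ) (y : ℝ), y ∈ Metric.ball c 1 →
      ‖Real.exp (-κ * (y - m)^2 / 2) * (-κ * (y - m))‖ ≤
        κ * ((|c - m| + 1) * Real.exp (-κ * (c - m)^2 / 2 + κ * |c - m|)) := by
    intro m y hy
    have hyc : |y - c| < 1 := by
      rw [Metric.mem_ball] at hy; rwa [← Real.dist_eq]
    have h1 : |y - (m:ℝ)| ≤ |c - m| + 1 := by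
      have := abs_sub_abs_le_abs_sub (y - (m:ℝ)) (c - (m:ℝ))
      have h2 : |y - (m:ℝ) - (c - m)| = |y - c| := by ring_nf
      rw [h2] at this; linarith
    have h2 : (c - (m:ℝ))^2 - 2 * |c - m| ≤ (y - m)^2 := by
      rcases le_or_gt 1 (|c - (m:ℝ)|) with h | h
      · have h3 : |c - (m:ℝ)| - 1 ≤ |y - (m:ℝ)| := by
          have := abs_sub_abs_le_abs_sub (c - (m:ℝ)) (y - (m:ℝ))
          have h4 : |c - (m:ℝ) - (y - m)| = |y - c| := by rw [← abs_neg]; ring_nf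
          rw [h4] at this; linarith
        have h5 : (|c - (m:ℝ)| - 1)^2 ≤ (y - m)^2 := by
          have := sq_abs (y - (m:ℝ)); nlinarith [abs_nonneg (y - (m:ℝ))]
        nlinarith [sq_abs (c - (m:ℝ))]
      · nlinarith [sq_nonneg (y - (m:ℝ)), sq_abs (c - (m:ℝ)), abs_nonneg (c - (m:ℝ))]
    rw [norm_mul, Real.norm_eq_abs, Real.norm_eq_abs, abs_of_pos (Real.exp_pos _),
      abs_mul, abs_neg, abs_of_pos hκ]
    calc Real.exp (-κ * (y - m)^2 / 2) * (κ * |y - (m:ℝ)|)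
        ≤ Real.exp (-κ * (c - m)^2 / 2 + κ * |c - m|) * (κ * (|c - m| + 1)) := by
          apply mul_le_mul _ _ (by positivity) (Real.exp_pos _).le
          · apply Real.exp_le_exp.2; nlinarith
          · have := abs_nonneg (y - (m:ℝ)); nlinarith
      _ = κ * ((|c - m| + 1) * Real.exp (-κ * (c - m)^2 / 2 + κ * |c - m|)) := by ring
  have hu : Summable (fun m : ℤ =>
      κ * ((|c - m| + 1) * Real.exp (-κ * (c - m)^2 / 2 + κ * |c - m|))) :=
    (summable_gd_aux2 hκ c 1 κ zero_le_one hκ.le).mul_left κ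
  have hder := hasDerivAt_tsum_of_isPreconnected hu Metric.isOpen_ball
    (convex_ball c (1:ℝ)).isPreconnected hterm hbound
    (Metric.mem_ball_self one_pos) (summable_g hκ c) (Metric.mem_ball_self one_pos)
  have heq : (∑' m : ℤ, Real.exp (-κ * (c - m)^2 / 2) * (-κ * (c - m))) = -κ * gd κ c := by
    rw [gd, ← tsum_mul_left]
    congr 1; funext m; ring
  rw [heq] at hder
  exact hder

lemma g_neg (hκ : 0 < κ) (c : ℝ) : g κ (-c) = g κ c := by
  rw [g, g, ← (Equiv.neg ℤ).tsum_eq (fun m : ℤ => Real.exp (-κ * (-c - m)^2 / 2))]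
  congr 1; funext m
  simp only [Equiv.neg_apply, Int.cast_neg]
  congr 2; ring

lemma gd_neg (hκ : 0 < κ) (c : ℝ) : gd κ (-c) = -gd κ c := by
  rw [gd, ← (Equiv.neg ℤ).tsum_eq (fun m : ℤ => (-c - m) * Real.exp (-κ * (-c - m)^2 / 2)),
    gd, ← tsum_neg]
  congr 1; funext m
  simp only [Equiv.neg_apply, Int.cast_neg]
  have h1 : -c - -(m:ℝ) = -(c - m) := by ring
  rw [h1]
  have h2 : -κ * (-(c - (m:ℝ)))^2 / 2 = -κ * (c - m)^2 / 2 := by ring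
  rw [h2]; ring

lemma gd_le_of_center (hκ : 0 < κ) (c : ℝ) (a : ℤ) (ha : 0 ≤ c - a/2) :
    gd κ c ≤ (c - a/2) * g κ c := by
  set s := c - (a:ℝ)/2 with hs
  set f : ℤ → ℝ := fun m => (c - m - s) * Real.exp (-κ * (c - m)^2 / 2) with hf
  have hsumf : Summable f := by
    refine Summable.of_norm (Summable.of_nonneg_of_le (fun m => norm_nonneg _) (fun m => ?_)
      (summable_gd_aux (hκ := hκ) c |s| (abs_nonneg s)))
    rw [Real.norm_eq_abs, abs_mul, abs_of_pos (Real.exp_pos _)]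
    apply mul_le_mul_of_nonneg_right _ (Real.exp_pos _).le
    calc |c - m - s| ≤ |c - (m:ℝ)| + |s| := abs_sub _ _
      _ = _ := rfl
  have hrefl : ∀ m : ℤ, f (a - m) = -(c - m - s) * Real.exp (-κ * ((2*s - (c - m)))^2 / 2) := by
    intro m
    have h1 : c - ((a:ℝ) - m) - s = -(c - m - s) := by
      have : (a:ℝ) = 2*c - 2*s := by rw [hs]; ring
      rw [this]; ring
    have h2 : c - ((a:ℝ) - m) = 2*s - (c - m) := by
      have : (a:ℝ) = 2*c - 2*s := by rw [hs]; ring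
      rw [this]; ring
    rw [hf]; push_cast; push_cast at h1 h2; rw [h1, h2]
  clear_value s
  have hT2 : (∑' m, f m) + (∑' m, f m) ≤ 0 := by
    have hre : (∑' m, f m) = ∑' m, f (a - m) := ((Equiv.subLeft a).tsum_eq f).symm
    have hsum2 : Summable (fun m => f (a - m)) := ((Equiv.subLeft a).summable_iff (f := f)).2 hsumf
    nth_rewrite 2 [hre]
    rw [← Summable.tsum_add hsumf hsum2]
    apply tsum_nonpos
    intro m
    rw [hrefl m]
    simp only [hf]
    set u := c - (m:ℝ) - s with hu
    clear_value u
    have hcm : c - (m:ℝ) = s + u := by rw [hu]; ring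
    rw [hcm]
    have h2s : 2*s - (s + u) = s - u := by ring
    rw [h2s]
    rcases le_or_gt 0 u with h | h
    · have : Real.exp (-κ * (s + u)^2 / 2) ≤ Real.exp (-κ * (s - u)^2 / 2) := by
        apply Real.exp_le_exp.2; nlinarith [mul_nonneg (mul_nonneg hκ.le ha) h]
      nlinarith [Real.exp_pos (-κ * (s - u)^2 / 2)]
    · have : Real.exp (-κ * (s - u)^2 / 2) ≤ Real.exp (-κ * (s + u)^2 / 2) := by
        apply Real.exp_le_exp.2; nlinarith [mul_nonneg (mul_nonneg hκ.le ha) (neg_nonneg.2 h.le)]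
      nlinarith [Real.exp_pos (-κ * (s + u)^2 / 2)]
  have hgd : gd κ c = s * g κ c + ∑' m, f m := by
    rw [gd, g, ← tsum_mul_left, ← Summable.tsum_add ((summable_g hκ c).mul_left s) hsumf]
    congr 1; funext m; rw [hf]; ring
  rw [hgd]
  nlinarith [hT2]

lemma abs_gd_le (hκ : 0 < κ) (c : ℝ) : |gd κ c| ≤ (1/2) * g κ c := by
  have hupper : ∀ d : ℝ, gd κ d ≤ (1/2) * g κ d := by
    intro d
    have ha1 : ((⌊2*d⌋ : ℝ)/2 : ℝ) ≤ d := by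
      have := Int.floor_le (2*d); linarith
    have ha2 : d - (⌊2*d⌋:ℝ)/2 < 1/2 := by
      have := Int.lt_floor_add_one (2*d); linarith
    calc gd κ d ≤ (d - (⌊2*d⌋:ℝ)/2) * g κ d := gd_le_of_center hκ d ⌊2*d⌋ (by linarith)
      _ ≤ (1/2) * g κ d := by nlinarith [g_pos hκ d]
  rw [abs_le]
  constructor
  · have := hupper (-c)
    rw [gd_neg hκ, g_neg hκ] at this
    linarith
  · exact hupper c

lemma g_ratio (hκ : 0 < κ) (c₁ c₂ : ℝ) :
    g κ c₁ ≤ Real.exp (κ/2 * |c₁ - c₂|) * g κ c₂ := by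
  have hlog : ∀ d : ℝ, HasDerivAt (fun z => Real.log (g κ z)) (-κ * gd κ d / g κ d) d :=
    fun d => (hasDerivAt_g hκ d).log (g_pos hκ d).ne'
  have hbd : ∀ d : ℝ, ‖-κ * gd κ d / g κ d‖ ≤ κ/2 := by
    intro d
    rw [Real.norm_eq_abs, abs_div, abs_mul, abs_neg, abs_of_pos hκ,
      abs_of_pos (g_pos hκ d)]
    rw [div_le_iff₀ (g_pos hκ d)]
    have := abs_gd_le hκ d
    nlinarith
  have key : ‖Real.log (g κ c₁) - Real.log (g κ c₂)‖ ≤ κ/2 * ‖c₁ - c₂‖ := by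
    apply convex_univ.norm_image_sub_le_of_norm_hasDerivWithin_le
      (fun d _ => (hlog d).hasDerivWithinAt) (fun d _ => hbd d) (Set.mem_univ c₂) (Set.mem_univ c₁)
  rw [Real.norm_eq_abs, Real.norm_eq_abs] at key
  have h1 : Real.log (g κ c₁) ≤ κ/2 * |c₁ - c₂| + Real.log (g κ c₂) := by
    have := abs_le.1 key; linarith [this.2]
  calc g κ c₁ = Real.exp (Real.log (g κ c₁)) := (Real.exp_log (g_pos hκ c₁)).symm
    _ ≤ Real.exp (κ/2 * |c₁ - c₂| + Real.log (g κ c₂)) := Real.exp_le_exp.2 h1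
    _ = Real.exp (κ/2 * |c₁ - c₂|) * g κ c₂ := by
        rw [Real.exp_add, Real.exp_log (g_pos hκ c₂)]

lemma g_int_shift (hκ : 0 < κ) (c : ℝ) (j : ℤ) : g κ (c + j) = g κ c := by
  rw [g, g, ← (Equiv.addRight j).tsum_eq (fun m : ℤ => Real.exp (-κ * (c + j - m)^2 / 2))]
  congr 1; funext m
  simp only [Equiv.coe_addRight]
  push_cast
  congr 2; ring

end St10

namespace St10
variable {κ : ℝ}

lemma tsum_prod_g (hκ : 0 < κ) : ∀ (N : ℕ) (c : Fin N → ℝ),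
    Summable (fun m : Fin N → ℤ => ∏ i, Real.exp (-κ * (c i - m i)^2 / 2)) ∧
    (∑' m : Fin N → ℤ, ∏ i, Real.exp (-κ * (c i - m i)^2 / 2)) = ∏ i, g κ (c i) := by
  intro N
  induction N with
  | zero =>
    intro c
    haveI : Unique (Fin 0 → ℤ) :=
      ⟨⟨fun i => i.elim0⟩, fun a => funext fun i => i.elim0⟩
    constructor
    · exact .of_finite
    · rw [tsum_eq_single (default : Fin 0 → ℤ)
        (fun b hb => absurd (Subsingleton.elim b default) hb)]
      simp
  | succ N ih =>
    intro c
    obtain ⟨hF, hFval⟩ := ih (fun i => c i.succ)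
    set e := Fin.consEquiv (fun _ : Fin (N+1) => ℤ) with he
    set f0 : ℤ → ℝ := fun a => Real.exp (-κ * (c 0 - a)^2 / 2) with hf0
    set F : (Fin N → ℤ) → ℝ :=
      fun b => ∏ i, Real.exp (-κ * (c i.succ - b i)^2 / 2) with hFdef
    have hcomp : ∀ p : ℤ × (Fin N → ℤ),
        (∏ i, Real.exp (-κ * (c i - (e p) i)^2 / 2)) = f0 p.1 * F p.2 := by
      intro p
      rw [Fin.prod_univ_succ]
      rfl
    have hf0sum : Summable f0 := summable_g hκ (c 0)
    have hprod : Summable (fun p : ℤ × (Fin N → ℤ) => f0 p.1 * F p.2) :=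
      hf0sum.mul_of_nonneg hF (fun a => (Real.exp_pos _).le)
        (fun b => Finset.prod_nonneg fun i _ => (Real.exp_pos _).le)
    have hsum : Summable (fun m : Fin (N+1) → ℤ =>
        ∏ i, Real.exp (-κ * (c i - m i)^2 / 2)) := by
      rw [← e.summable_iff]
      exact hprod.congr fun p => (hcomp p).symm
    refine ⟨hsum, ?_⟩
    have h1 : (∑' m : Fin (N+1) → ℤ, ∏ i, Real.exp (-κ * (c i - m i)^2 / 2))
        = ∑' p : ℤ × (Fin N → ℤ), f0 p.1 * F p.2 := by
      rw [← e.tsum_eq]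
      exact tsum_congr hcomp
    have h2 : (∑' p : ℤ × (Fin N → ℤ), f0 p.1 * F p.2) = (∑' a, f0 a) * ∑' b, F b := by
      refine (tsum_mul_tsum_of_summable_norm ?_ ?_).symm
      · exact hf0sum.congr fun a => (Real.norm_of_nonneg (Real.exp_pos _).le).symm
      · exact hF.congr fun b => (Real.norm_of_nonneg
          (Finset.prod_nonneg fun i _ => (Real.exp_pos _).le)).symm
    rw [h1, h2, hFval, Fin.prod_univ_succ]
    rfl

lemma kpos {k : ℕ} (hk : 1 ≤ k) : (0:ℝ) < (k:ℝ) := by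
  exact_mod_cast Nat.lt_of_lt_of_le Nat.zero_lt_one hk

lemma wave_eq {n : ℕ} {k : ℕ} (hk : 1 ≤ k) (p x : Fin n → ℝ) :
    wave k p x = ∏ i, g (k:ℝ) (x i - p i) := by
  have hκ := kpos hk
  rw [wave, ← (tsum_prod_g hκ n (fun i => x i - p i)).2]
  apply tsum_congr
  intro m
  rw [sqnorm]
  have harg : -(k:ℝ) * (∑ i, ((x - p - zvec m) i)^2) / 2
      = ∑ i, (-(k:ℝ) * ((x i - p i) - m i)^2 / 2) := by
    rw [Finset.mul_sum, Finset.sum_div]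
    apply Finset.sum_congr rfl
    intro i _
    simp [zvec, Pi.sub_apply]
  rw [harg, Real.exp_sum]

lemma wave_pos {n : ℕ} {k : ℕ} (hk : 1 ≤ k) (p x : Fin n → ℝ) : 0 < wave k p x := by
  rw [wave_eq hk]
  exact Finset.prod_pos fun i _ => g_pos (kpos hk) _

lemma tdist_bddBelow {n : ℕ} (x y : Torus n) :
    BddBelow (Set.range fun m : Fin n → ℤ =>
      Real.sqrt (sqnorm (torusSec x - torusSec y - zvec m))) := by
  refine ⟨0, ?_⟩
  rintro r ⟨m, rfl⟩
  exact Real.sqrt_nonneg _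

lemma tdist_nonneg {n : ℕ} (x y : Torus n) : 0 ≤ tdist x y :=
  Real.iInf_nonneg fun m => Real.sqrt_nonneg _

lemma round_min (t : ℝ) (m : ℤ) : (t - round t)^2 ≤ (t - m)^2 := by
  have h1 : |t - round t| ≤ 1/2 := abs_sub_round t
  have h2 : |t - round t| ≤ |t - m| := by
    rcases eq_or_ne m (round t) with rfl | hne
    · exact le_rfl
    · have h3 : (1:ℝ) ≤ |(round t : ℝ) - m| := by
        have h0 : round t - m ≠ 0 := sub_ne_zero.2 (Ne.symm hne)
        have h4 : (1:ℤ) ≤ |round t - m| := Int.one_le_abs h0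
        have h5 : ((|round t - m| : ℤ) : ℝ) = |(round t : ℝ) - m| := by
          push_cast [Int.cast_abs]
          norm_num
        calc (1:ℝ) = ((1:ℤ):ℝ) := by norm_num
          _ ≤ ((|round t - m| : ℤ) : ℝ) := by exact_mod_cast h4
          _ = |(round t : ℝ) - m| := h5
      have h5 : |(round t:ℝ) - m| - |t - round t| ≤ |t - m| := by
        have h6 := abs_sub_abs_le_abs_sub ((round t:ℝ) - m) ((round t:ℝ) - t)
        have heq : (round t:ℝ) - m - ((round t:ℝ) - t) = t - m := by ring
        rw [heq] at h6
        have habs : |(round t:ℝ) - t| = |t - round t| := abs_sub_comm _ _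
        linarith [h6, habs.le, habs.ge]
      linarith
  calc (t - round t)^2 = |t - round t|^2 := (sq_abs _).symm
    _ ≤ |t - m|^2 := by nlinarith [abs_nonneg (t - round t)]
    _ = (t - m)^2 := sq_abs _

/-- minimal representative of the difference of two torus points -/
def minrep {n : ℕ} (x y : Torus n) : Fin n → ℝ :=
  fun i => (torusSec x i - torusSec y i) - round (torusSec x i - torusSec y i)

lemma tdist_eq_minrep {n : ℕ} (x y : Torus n) :
    tdist x y = Real.sqrt (sqnorm (minrep x y)) := by
  apply le_antisymm
  · have h := ciInf_le (tdist_bddBelow x y)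
      (fun i => round (torusSec x i - torusSec y i))
    refine h.trans_eq (congrArg Real.sqrt ?_)
    simp only [sqnorm]
    apply Finset.sum_congr rfl
    intro i _
    simp [minrep, zvec, Pi.sub_apply]
  · apply le_ciInf
    intro m
    apply Real.sqrt_le_sqrt
    simp only [sqnorm]
    apply Finset.sum_le_sum
    intro i _
    simpa [minrep, zvec, Pi.sub_apply] using round_min (torusSec x i - torusSec y i) (m i)

lemma sum_abs_minrep_le {n : ℕ} (x y : Torus n) :
    ∑ i, |minrep x y i| ≤ Real.sqrt n * tdist x y := by
  rw [tdist_eq_minrep]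
  have h1 : (∑ i, |minrep x y i|)^2 ≤ (n:ℝ) * sqnorm (minrep x y) := by
    have h := sq_sum_le_card_mul_sum_sq (s := Finset.univ)
      (f := fun i : Fin n => |minrep x y i|)
    simpa [sqnorm, sq_abs] using h
  have h2 : (0:ℝ) ≤ ∑ i, |minrep x y i| := Finset.sum_nonneg fun i _ => abs_nonneg _
  calc ∑ i, |minrep x y i| = Real.sqrt ((∑ i, |minrep x y i|)^2) := (Real.sqrt_sq h2).symm
    _ ≤ Real.sqrt ((n:ℝ) * sqnorm (minrep x y)) := Real.sqrt_le_sqrt h1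
    _ = Real.sqrt n * Real.sqrt (sqnorm (minrep x y)) := Real.sqrt_mul (Nat.cast_nonneg n) _

lemma tdist_le_sqrt {n : ℕ} (x y : Torus n) : tdist x y ≤ Real.sqrt n := by
  rw [tdist_eq_minrep]
  have h1 : sqnorm (minrep x y) ≤ (n:ℝ) := by
    rw [sqnorm]
    calc ∑ i, (minrep x y i)^2 ≤ ∑ _i : Fin n, (1:ℝ) := by
          apply Finset.sum_le_sum
          intro i _
          have h := abs_sub_round (torusSec x i - torusSec y i)
          have h2 : |minrep x y i| ≤ 1/2 := h
          nlinarith [abs_nonneg (minrep x y i), sq_abs (minrep x y i)]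
      _ = (n:ℝ) := by simp
  exact Real.sqrt_le_sqrt h1

lemma tdist_symm {n : ℕ} (x y : Torus n) : tdist x y = tdist y x := by
  rw [tdist_eq_minrep, tdist_eq_minrep]
  refine congrArg Real.sqrt ?_
  simp only [sqnorm]
  apply Finset.sum_congr rfl
  intro i _
  simp only [minrep]
  set c := torusSec x i - torusSec y i with hc
  have hyx : torusSec y i - torusSec x i = -c := by rw [hc]; ring
  rw [hyx]
  apply le_antisymm
  · calc (c - round c)^2 ≤ (c - ((-(round (-c)) : ℤ):ℝ))^2 := round_min c _
      _ = (-c - round (-c))^2 := by push_cast; ring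
  · calc (-c - round (-c))^2 ≤ (-c - ((-(round c) : ℤ):ℝ))^2 := round_min (-c) _
      _ = (c - round c)^2 := by push_cast; ring

lemma torusDiam_ge (n : ℕ) : Real.sqrt n / 2 ≤ torusDiam n := by
  set x0 : Torus n := fun _ => (0 : AddCircle (1:ℝ)) with hx0
  set y0 : Torus n := fun _ => (((1:ℝ)/2 : ℝ) : AddCircle (1:ℝ)) with hy0
  have hlow : Real.sqrt n / 2 ≤ tdist x0 y0 := by
    have hcoord : ∀ (i : Fin n) (m : ℤ),
        (1:ℝ)/4 ≤ (torusSec x0 i - torusSec y0 i - m)^2 := by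
      intro i m
      have h1 : ((torusSec x0 i : ℝ) : AddCircle (1:ℝ)) = x0 i :=
        (AddCircle.equivIco 1 0).symm_apply_apply (x0 i)
      have h2 : ((torusSec y0 i : ℝ) : AddCircle (1:ℝ)) = y0 i :=
        (AddCircle.equivIco 1 0).symm_apply_apply (y0 i)
      have h3 : ((torusSec x0 i - torusSec y0 i + 1/2 : ℝ) : AddCircle (1:ℝ)) = 0 := by
        rw [AddCircle.coe_add, AddCircle.coe_sub, h1, h2, hx0, hy0]
        simp
      obtain ⟨j, hj⟩ := (AddCircle.coe_eq_zero_iff _).1 h3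
      have hj2 : (j:ℝ) = torusSec x0 i - torusSec y0 i + 1/2 := by
        simpa [zsmul_eq_mul] using hj
      have heq : torusSec x0 i - torusSec y0 i - m = ((j - m : ℤ):ℝ) - 1/2 := by
        push_cast
        linarith
      rw [heq]
      rcases le_or_gt (j - m) 0 with h | h
      · have h' : ((j - m : ℤ):ℝ) ≤ 0 := by exact_mod_cast h
        nlinarith
      · have h' : (1:ℝ) ≤ ((j - m : ℤ):ℝ) := by exact_mod_cast h
        nlinarith
    apply le_ciInf
    intro m
    have hsum : (n:ℝ)/4 ≤ sqnorm (torusSec x0 - torusSec y0 - zvec m) := by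
      rw [sqnorm]
      calc (n:ℝ)/4 = ∑ _i : Fin n, (1:ℝ)/4 := by
            simp
            ring
        _ ≤ ∑ i, ((torusSec x0 - torusSec y0 - zvec m) i)^2 := by
            apply Finset.sum_le_sum
            intro i _
            simpa [zvec, Pi.sub_apply] using hcoord i (m i)
    calc Real.sqrt n / 2 = Real.sqrt ((n:ℝ)/4) := by
          rw [show ((n:ℝ)/4) = (n:ℝ) * (1/2)^2 by ring, Real.sqrt_mul (Nat.cast_nonneg n),
            Real.sqrt_sq (by norm_num : (0:ℝ) ≤ 1/2)]
          ring
      _ ≤ _ := Real.sqrt_le_sqrt hsum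
  have hb1 : BddAbove (Set.range fun y => tdist x0 y) := by
    refine ⟨Real.sqrt n, ?_⟩
    rintro r ⟨y, rfl⟩
    exact tdist_le_sqrt x0 y
  have hb2 : BddAbove (Set.range fun x : Torus n => ⨆ y, tdist x y) := by
    refine ⟨Real.sqrt n, ?_⟩
    rintro r ⟨x, rfl⟩
    exact ciSup_le fun y => tdist_le_sqrt x y
  calc Real.sqrt n / 2 ≤ tdist x0 y0 := hlow
    _ ≤ ⨆ y, tdist x0 y := le_ciSup hb1 y0
    _ ≤ torusDiam n := le_ciSup hb2 x0

lemma torusDiam_nonneg (n : ℕ) : 0 ≤ torusDiam n :=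
  le_trans (by positivity) (torusDiam_ge n)

lemma wave_ratio {n : ℕ} {k : ℕ} (hk : 1 ≤ k) (p : Fin n → ℝ) (a b : Torus n) :
    wave k p (torusSec a) ≤
      Real.exp ((k:ℝ) * torusDiam n * tdist a b) * wave k p (torusSec b) := by
  have hκ := kpos hk
  have hshift : ∀ i, g (k:ℝ) (torusSec a i - p i)
      = g (k:ℝ) ((torusSec b i - p i) + minrep a b i) := by
    intro i
    have heq : torusSec a i - p i =
        ((torusSec b i - p i) + minrep a b i) +
          ((round (torusSec a i - torusSec b i) : ℤ) : ℝ) := by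
      simp only [minrep]
      ring
    rw [heq, g_int_shift hκ]
  have hterm : ∀ i, g (k:ℝ) (torusSec a i - p i)
      ≤ Real.exp ((k:ℝ)/2 * |minrep a b i|) * g (k:ℝ) (torusSec b i - p i) := by
    intro i
    rw [hshift i]
    have h := g_ratio hκ ((torusSec b i - p i) + minrep a b i) (torusSec b i - p i)
    simpa using h
  rw [wave_eq hk, wave_eq hk]
  calc ∏ i, g (k:ℝ) (torusSec a i - p i)
      ≤ ∏ i, (Real.exp ((k:ℝ)/2 * |minrep a b i|) * g (k:ℝ) (torusSec b i - p i)) :=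
        Finset.prod_le_prod (fun i _ => (g_pos hκ _).le) (fun i _ => hterm i)
    _ = (∏ i, Real.exp ((k:ℝ)/2 * |minrep a b i|)) * ∏ i, g (k:ℝ) (torusSec b i - p i) :=
        Finset.prod_mul_distrib
    _ ≤ Real.exp ((k:ℝ) * torusDiam n * tdist a b) *
          ∏ i, g (k:ℝ) (torusSec b i - p i) := by
        apply mul_le_mul_of_nonneg_right _
          (Finset.prod_nonneg fun i _ => (g_pos hκ _).le)
        rw [← Real.exp_sum]
        apply Real.exp_le_exp.2
        rw [← Finset.mul_sum]
        have h1 : ∑ i, |minrep a b i| ≤ Real.sqrt n * tdist a b := sum_abs_minrep_le a b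
        have h2 : Real.sqrt n / 2 ≤ torusDiam n := torusDiam_ge n
        have h3 : 0 ≤ tdist a b := tdist_nonneg a b
        have h4 : (k:ℝ)/2 * ∑ i, |minrep a b i| ≤ (k:ℝ)/2 * (Real.sqrt n * tdist a b) :=
          mul_le_mul_of_nonneg_left h1 (by positivity)
        have h5 : ((k:ℝ) * tdist a b) * (Real.sqrt n / 2) ≤
            ((k:ℝ) * tdist a b) * torusDiam n :=
          mul_le_mul_of_nonneg_left h2 (by positivity)
        nlinarith

lemma perm_pos {n k : ℕ} (hk : 1 ≤ k) (x : (Fin n → Fin k) → Torus n) :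
    0 < perm (fun p q => wave k (latticePt k p) (torusSec (x q))) := by
  rw [perm]
  exact Finset.sum_pos
    (fun τ _ => Finset.prod_pos fun p _ => wave_pos hk _ _) Finset.univ_nonempty

lemma perm_le {n k : ℕ} (hk : 1 ≤ k) (x y : (Fin n → Fin k) → Torus n)
    (σ : Equiv.Perm (Fin n → Fin k)) :
    perm (fun p q => wave k (latticePt k p) (torusSec (x q))) ≤
      Real.exp ((k:ℝ) * torusDiam n * ∑ i, tdist (x i) (y (σ i))) *
        perm (fun p q => wave k (latticePt k p) (torusSec (y q))) := by
  have hκ := kpos hk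
  set E := Real.exp ((k:ℝ) * torusDiam n * ∑ i, tdist (x i) (y (σ i))) with hE
  have hBre : (∑ τ : Equiv.Perm (Fin n → Fin k),
        ∏ p, wave k (latticePt k p) (torusSec (y (σ (τ p)))))
      = perm (fun p q => wave k (latticePt k p) (torusSec (y q))) := by
    rw [perm]
    exact Fintype.sum_equiv (Equiv.mulLeft σ) _ _ (fun τ => rfl)
  have hterm : ∀ τ : Equiv.Perm (Fin n → Fin k),
      (∏ p, wave k (latticePt k p) (torusSec (x (τ p)))) ≤
        E * ∏ p, wave k (latticePt k p) (torusSec (y (σ (τ p)))) := by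
    intro τ
    calc (∏ p, wave k (latticePt k p) (torusSec (x (τ p))))
        ≤ ∏ p, (Real.exp ((k:ℝ) * torusDiam n * tdist (x (τ p)) (y (σ (τ p)))) *
            wave k (latticePt k p) (torusSec (y (σ (τ p))))) :=
          Finset.prod_le_prod (fun p _ => (wave_pos hk _ _).le)
            (fun p _ => wave_ratio hk _ _ _)
      _ = (∏ p, Real.exp ((k:ℝ) * torusDiam n * tdist (x (τ p)) (y (σ (τ p))))) *
            ∏ p, wave k (latticePt k p) (torusSec (y (σ (τ p)))) :=
          Finset.prod_mul_distrib
      _ = E * ∏ p, wave k (latticePt k p) (torusSec (y (σ (τ p)))) := by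
          congr 1
          rw [← Real.exp_sum, hE]
          congr 1
          rw [← Finset.mul_sum]
          congr 1
          exact Fintype.sum_equiv τ _ _ (fun p => rfl)
  calc perm (fun p q => wave k (latticePt k p) (torusSec (x q)))
      = ∑ τ : Equiv.Perm (Fin n → Fin k),
          ∏ p, wave k (latticePt k p) (torusSec (x (τ p))) := rfl
    _ ≤ ∑ τ : Equiv.Perm (Fin n → Fin k),
          E * ∏ p, wave k (latticePt k p) (torusSec (y (σ (τ p)))) :=
        Finset.sum_le_sum fun τ _ => hterm τ
    _ = E * ∑ τ : Equiv.Perm (Fin n → Fin k),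
          ∏ p, wave k (latticePt k p) (torusSec (y (σ (τ p)))) := by
        rw [Finset.mul_sum]
    _ = E * perm (fun p q => wave k (latticePt k p) (torusSec (y q))) := by rw [hBre]

end St10

/-- The normalized Hamiltonians `H^{(N)}/N` are uniformly Lipschitz (with
constant `diam X`) for the matching metrics; in particular they are equicontinuous. -/
theorem statement10 (n k : ℕ) (hn : 1 ≤ n) (hk : 1 ≤ k)
    (x y : (Fin n → Fin k) → Torus n) :
    |Ham n k x / ((k ^ n : ℕ) : ℝ) - Ham n k y / ((k ^ n : ℕ) : ℝ)| ≤
      torusDiam n * matchDistT x y := by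
  classical
  have hκ := St10.kpos hk
  have hApos := St10.perm_pos hk x
  have hBpos := St10.perm_pos hk y
  have hD0 : 0 ≤ torusDiam n := St10.torusDiam_nonneg n
  set LA := Real.log (perm (fun p q => wave k (latticePt k p) (torusSec (x q)))) with hLA
  set LB := Real.log (perm (fun p q => wave k (latticePt k p) (torusSec (y q)))) with hLB
  set S : Equiv.Perm (Fin n → Fin k) → ℝ := fun σ => ∑ i, tdist (x i) (y (σ i)) with hS
  obtain ⟨σ₀, hσ₀⟩ := Finite.exists_min S
  have hSbdd : BddBelow (Set.range S) := by
    refine ⟨S σ₀, ?_⟩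
    rintro r ⟨σ, rfl⟩
    exact hσ₀ σ
  have hinf : (⨅ σ, S σ) = S σ₀ := le_antisymm (ciInf_le hSbdd σ₀) (le_ciInf hσ₀)
  have hS0 : 0 ≤ S σ₀ := Finset.sum_nonneg fun i _ => St10.tdist_nonneg _ _
  have hup : LA - LB ≤ (k:ℝ) * torusDiam n * S σ₀ := by
    have h1 := St10.perm_le hk x y σ₀
    have h2 := Real.log_le_log hApos h1
    rw [Real.log_mul (Real.exp_ne_zero _) hBpos.ne', Real.log_exp] at h2
    rw [hLA, hLB]
    linarith
  have hlow : LB - LA ≤ (k:ℝ) * torusDiam n * S σ₀ := by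
    have h1 := St10.perm_le hk y x σ₀⁻¹
    have hSeq : (∑ i, tdist (y i) (x (σ₀⁻¹ i))) = S σ₀ := by
      rw [hS]
      refine (Fintype.sum_equiv σ₀ (fun j => tdist (x j) (y (σ₀ j)))
        (fun i => tdist (y i) (x (σ₀⁻¹ i))) ?_).symm
      intro j
      show tdist (x j) (y (σ₀ j)) = tdist (y (σ₀ j)) (x (σ₀⁻¹ (σ₀ j)))
      rw [Equiv.Perm.inv_def, Equiv.symm_apply_apply]
      exact St10.tdist_symm _ _
    rw [hSeq] at h1
    have h2 := Real.log_le_log hBpos h1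
    rw [Real.log_mul (Real.exp_ne_zero _) hApos.ne', Real.log_exp] at h2
    rw [hLA, hLB]
    linarith
  have habs : |LA - LB| ≤ (k:ℝ) * torusDiam n * S σ₀ := abs_le.2 ⟨by linarith, hup⟩
  have hcard : ((Fintype.card (Fin n → Fin k) : ℕ) : ℝ) = ((k ^ n : ℕ) : ℝ) := by
    rw [Fintype.card_fun]
    simp
  have hNpos : (0:ℝ) < ((k ^ n : ℕ) : ℝ) := by
    have : 0 < k ^ n := Nat.pow_pos (Nat.lt_of_lt_of_le Nat.zero_lt_one hk)
    exact_mod_cast this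
  simp only [Ham, matchDistT]
  rw [hcard, hinf]
  rw [← hLA, ← hLB]
  have heq : -(1 / (k:ℝ)) * LA / ((k ^ n : ℕ) : ℝ) - -(1 / (k:ℝ)) * LB / ((k ^ n : ℕ) : ℝ)
      = (LB - LA) / ((k:ℝ) * ((k ^ n : ℕ) : ℝ)) := by
    field_simp
    ring
  rw [heq, abs_div, abs_of_pos (by positivity : (0:ℝ) < (k:ℝ) * ((k ^ n : ℕ) : ℝ)),
    abs_sub_comm]
  rw [div_le_iff₀ (by positivity : (0:ℝ) < (k:ℝ) * ((k ^ n : ℕ) : ℝ))]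
  calc |LA - LB| ≤ (k:ℝ) * torusDiam n * S σ₀ := habs
    _ = torusDiam n * ((((k ^ n : ℕ) : ℝ))⁻¹ * S σ₀) * ((k:ℝ) * ((k ^ n : ℕ) : ℝ)) := by
        field_simp
end
end

section
/- Let (E, μ) be a σ-finite measure space, N ≥ 1, and let f₁, …, f_N : E → ℂ be square integrable with respect to μ. Then det(∫_E f_j · conj(f_k) dμ)_{j,k=1}^N = (1/N!) ∫_{E^N} |det(f_k(x_j))_{j,k=1}^N|² dμ^{⊗N}(x₁,…,x_N). -/
open MeasureTheory Finset
open scoped ENNReal ComplexConjugate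

noncomputable section

private theorem st14_integrable_mul {E : Type*} [MeasurableSpace E] (μ : Measure E) (g h : E → ℂ)
    (hg : MemLp g 2 μ) (hh : MemLp h 2 μ) :
    Integrable (fun t => g t * conj (h t)) μ := by
  have hh' : MemLp (fun t => conj (h t)) 2 μ := by
    refine MemLp.of_le hh ?_ ?_
    · exact RCLike.continuous_conj.comp_aestronglyMeasurable hh.1
    · filter_upwards with x; simp
  have key : (1:ℝ≥0∞)/1 = 1/2 + 1/2 := by
    rw [ENNReal.div_add_div_same, one_add_one_eq_two,
      ENNReal.div_self two_ne_zero ENNReal.ofNat_ne_top, div_one]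
  haveI : ENNReal.HolderTriple 2 2 1 := ⟨by simpa [one_div] using key.symm⟩
  have h2 : MemLp (g • fun t => conj (h t)) 1 μ := hh'.smul (φ := g) hg
  rw [← memLp_one_iff_integrable]
  exact h2

/-- Gram determinant formula: for `f₁, …, f_N ∈ L²(μ)`,
`det(∫ f_j conj(f_k) dμ) = (1/N!) ∫_{E^N} |det(f_k(x_j))|² dμ^{⊗N}`. -/
theorem statement14 {E : Type*} [MeasurableSpace E] (μ : Measure E) [SigmaFinite μ]
    (N : ℕ) (hN : 1 ≤ N) (f : Fin N → E → ℂ)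
    (hmeas : ∀ j, Measurable (f j)) (hL2 : ∀ j, MemLp (f j) 2 μ) :
    Matrix.det (Matrix.of fun j k => ∫ t, f j t * (starRingEnd ℂ) (f k t) ∂μ) =
      (N.factorial : ℂ)⁻¹ *
        ((∫ x : Fin N → E, ‖Matrix.det (Matrix.of fun j k => f k (x j))‖ ^ 2
          ∂(Measure.pi fun _ : Fin N => μ) : ℝ) : ℂ) := by
  classical
  letI : MeasureSpace E := ⟨μ⟩
  haveI : SigmaFinite (volume : Measure E) := ‹SigmaFinite μ›
  set G : Matrix (Fin N) (Fin N) ℂ :=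
    Matrix.of fun j k => ∫ t, f j t * (starRingEnd ℂ) (f k t) ∂μ with hG
  set D : (Fin N → E) → ℂ := fun x => Matrix.det (Matrix.of fun j k => f k (x j)) with hD
  have hInt : ∀ j k : Fin N, Integrable (fun t => f j t * conj (f k t)) μ :=
    fun j k => st14_integrable_mul μ _ _ (hL2 j) (hL2 k)
  -- pointwise expansion of |det|^2
  have hpoint : ∀ x : Fin N → E,
      D x * conj (D x) = ∑ σ : Equiv.Perm (Fin N), ∑ τ : Equiv.Perm (Fin N),
        (((Equiv.Perm.sign σ : ℤ) : ℂ) * ((Equiv.Perm.sign τ : ℤ) : ℂ)) *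
          ∏ j, (f (σ⁻¹ j) (x j) * conj (f (τ⁻¹ j) (x j))) := by
    intro x
    simp only [hD]
    rw [Matrix.det_apply', map_sum, Finset.sum_mul_sum]
    refine Finset.sum_congr rfl fun σ _ => Finset.sum_congr rfl fun τ _ => ?_
    simp only [map_mul, map_prod, map_intCast, Matrix.of_apply]
    have h1 : ∏ i, f i (x (σ i)) = ∏ j, f (σ⁻¹ j) (x j) := by
      rw [← Equiv.prod_comp σ (fun j => f (σ⁻¹ j) (x j))]
      simp
    have h2 : ∏ i, conj (f i (x (τ i))) = ∏ j, conj (f (τ⁻¹ j) (x j)) := by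
      rw [← Equiv.prod_comp τ (fun j => conj (f (τ⁻¹ j) (x j)))]
      simp
    rw [h1, h2, Finset.prod_mul_distrib]
    ring
  -- integral of each term factorizes
  have hterm : ∀ σ τ : Equiv.Perm (Fin N),
      ∫ x : Fin N → E, ∏ j, (f (σ⁻¹ j) (x j) * conj (f (τ⁻¹ j) (x j)))
          ∂(Measure.pi fun _ : Fin N => μ)
        = ∏ j, G (σ⁻¹ j) (τ⁻¹ j) := by
    intro σ τ
    exact MeasureTheory.integral_fintype_prod_eq_prod (ι := Fin N)
      (f := fun j t => f (σ⁻¹ j) t * conj (f (τ⁻¹ j) t))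
  have hintegrable : ∀ σ τ : Equiv.Perm (Fin N),
      Integrable (fun x : Fin N → E =>
        (((Equiv.Perm.sign σ : ℤ) : ℂ) * ((Equiv.Perm.sign τ : ℤ) : ℂ)) *
          ∏ j, (f (σ⁻¹ j) (x j) * conj (f (τ⁻¹ j) (x j))))
        (Measure.pi fun _ : Fin N => μ) := by
    intro σ τ
    exact (MeasureTheory.Integrable.fintype_prod
      (f := fun j t => f (σ⁻¹ j) t * conj (f (τ⁻¹ j) t))
      (fun j => hInt (σ⁻¹ j) (τ⁻¹ j))).const_mul _
  have hint2 : ∫ x : Fin N → E, D x * conj (D x) ∂(Measure.pi fun _ : Fin N => μ)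
      = (N.factorial : ℂ) * G.det := by
    calc ∫ x : Fin N → E, D x * conj (D x) ∂(Measure.pi fun _ : Fin N => μ)
        = ∑ σ : Equiv.Perm (Fin N), ∑ τ : Equiv.Perm (Fin N),
            (((Equiv.Perm.sign σ : ℤ) : ℂ) * ((Equiv.Perm.sign τ : ℤ) : ℂ)) *
              ∏ j, G (σ⁻¹ j) (τ⁻¹ j) := by
          simp_rw [hpoint]
          rw [integral_finset_sum _ (fun σ _ =>
            integrable_finset_sum _ (fun τ _ => hintegrable σ τ))]
          refine Finset.sum_congr rfl fun σ _ => ?_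
          rw [integral_finset_sum _ (fun τ _ => hintegrable σ τ)]
          refine Finset.sum_congr rfl fun τ _ => ?_
          rw [integral_const_mul, hterm]
      _ = ∑ σ : Equiv.Perm (Fin N), ∑ τ : Equiv.Perm (Fin N),
            (((Equiv.Perm.sign σ : ℤ) : ℂ) * ((Equiv.Perm.sign τ : ℤ) : ℂ)) *
              ∏ j, G (σ j) (τ j) := by
          refine Fintype.sum_equiv (Equiv.inv _) _ _ fun σ => ?_
          refine Fintype.sum_equiv (Equiv.inv _) _ _ fun τ => ?_
          simp [Equiv.Perm.sign_inv]
      _ = ∑ σ : Equiv.Perm (Fin N), G.det := by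
          refine Finset.sum_congr rfl fun σ _ => ?_
          rw [← Matrix.det_transpose G, Matrix.det_apply']
          refine Fintype.sum_equiv (Equiv.mulRight σ⁻¹) _ _ fun τ => ?_
          have hs2 : ((Equiv.Perm.sign σ : ℤ) : ℂ) * ((Equiv.Perm.sign σ : ℤ) : ℂ) = 1 := by
            have : (Equiv.Perm.sign σ : ℤ) * (Equiv.Perm.sign σ : ℤ) = 1 := by
              rw [← Units.val_mul, Int.units_mul_self, Units.val_one]
            exact_mod_cast this
          have hprod : ∏ j, G (σ j) (τ j) = ∏ j, G j (τ (σ⁻¹ j)) := by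
            rw [← Equiv.prod_comp σ⁻¹ (fun j => G (σ j) (τ j))]
            simp
          simp only [Equiv.coe_mulRight, Matrix.transpose_apply, Equiv.Perm.mul_apply,
            Equiv.Perm.sign_mul, Equiv.Perm.sign_inv, hprod, Units.val_mul, Int.cast_mul]
          ring
      _ = (N.factorial : ℂ) * G.det := by
          rw [Finset.sum_const, Finset.card_univ, Fintype.card_perm, Fintype.card_fin,
            nsmul_eq_mul]
  have hreal : ((∫ x : Fin N → E, ‖D x‖ ^ 2 ∂(Measure.pi fun _ : Fin N => μ) : ℝ) : ℂ)
      = ∫ x : Fin N → E, D x * conj (D x) ∂(Measure.pi fun _ : Fin N => μ) := by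
    symm
    have hpt : ∀ x : Fin N → E, D x * conj (D x) = ((‖D x‖ ^ 2 : ℝ) : ℂ) := by
      intro x
      rw [Complex.mul_conj]
      norm_cast
      rw [Complex.normSq_eq_norm_sq]
    rw [integral_congr_ae (Filter.Eventually.of_forall hpt)]
    exact integral_ofReal
  rw [hreal, hint2, inv_mul_cancel_left₀]
  exact_mod_cast Nat.factorial_ne_zero N
end
end

section
/- Let X be a measurable space, μ₀ and μ Borel probability measures on X, and φ : X → ℝ a bounded measurable function. Then log ∫_X e^{φ} dμ₀ + Ent_{μ₀}(μ) ≥ ∫_X φ dμ, with equality if and only if μ = e^{φ} μ₀ / ∫_X e^{φ} dμ₀ (i.e. μ is absolutely continuous with respect to μ₀ with density e^{φ}/∫_X e^{φ} dμ₀). -/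
open MeasureTheory Real
open scoped ENNReal

noncomputable section

open scoped Classical in
/-- Relative entropy `Ent_{μ₀}(μ)`, with value `⊤` when `μ` is not absolutely continuous
with respect to `μ₀` (or the defining integral is not finite). -/
def Ent {X : Type*} [MeasurableSpace X] (μ₀ μ : Measure X) : EReal :=
  if μ ≪ μ₀ ∧ Integrable (fun x => Real.log ((μ.rnDeriv μ₀ x).toReal)) μ
  then ((∫ x, Real.log ((μ.rnDeriv μ₀ x).toReal) ∂μ : ℝ) : EReal)
  else ⊤

/-- Gibbs' inequality: relative entropy is nonneg, zero iff equal. -/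
theorem gibbs_key {α : Type*} [MeasurableSpace α] (μ ν : Measure α)
    [IsProbabilityMeasure μ] [IsProbabilityMeasure ν] (hμν : μ ≪ ν)
    (hint : Integrable (llr μ ν) μ) :
    0 ≤ ∫ x, llr μ ν x ∂μ ∧ (∫ x, llr μ ν x ∂μ = 0 ↔ μ = ν) := by
  -- the "inverse density"
  set w : α → ℝ := fun x => (ν.rnDeriv μ x).toReal with hw
  have hw_int : Integrable w μ := by
    refine integrable_toReal_of_lintegral_ne_top (Measure.measurable_rnDeriv _ _).aemeasurable ?_
    exact ((Measure.lintegral_rnDeriv_le).trans_lt (by simp [measure_univ])).ne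
  have hw_integral_le : ∫ x, w x ∂μ ≤ 1 := by
    have h1 : ∫⁻ x, ENNReal.ofReal (w x) ∂μ ≤ 1 := by
      calc ∫⁻ x, ENNReal.ofReal (w x) ∂μ ≤ ∫⁻ x, ν.rnDeriv μ x ∂μ :=
            lintegral_mono fun x => ENNReal.ofReal_toReal_le
        _ ≤ ν Set.univ := Measure.lintegral_rnDeriv_le
        _ = 1 := measure_univ
    rw [integral_eq_lintegral_of_nonneg_ae (Filter.Eventually.of_forall fun x => ENNReal.toReal_nonneg)
      (Measure.measurable_rnDeriv _ _).ennreal_toReal.aestronglyMeasurable]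
    calc (∫⁻ x, ENNReal.ofReal (w x) ∂μ).toReal ≤ (1 : ℝ≥0∞).toReal :=
          ENNReal.toReal_mono (by simp) h1
      _ = 1 := by simp
  -- a.e. facts
  have hpos : ∀ᵐ x ∂μ, 0 < (μ.rnDeriv ν x).toReal := by
    filter_upwards [Measure.rnDeriv_pos hμν, hμν.ae_le (Measure.rnDeriv_lt_top μ ν)] with x h1 h2
    exact ENNReal.toReal_pos h1.ne' h2.ne
  have hinv : ∀ᵐ x ∂μ, w x = ((μ.rnDeriv ν x).toReal)⁻¹ := by
    filter_upwards [Measure.inv_rnDeriv hμν, Measure.rnDeriv_pos hμν,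
      hμν.ae_le (Measure.rnDeriv_lt_top μ ν)] with x h1 h2 h3
    calc w x = ((μ.rnDeriv ν)⁻¹ x).toReal := by rw [h1]
      _ = ((μ.rnDeriv ν x).toReal)⁻¹ := by rw [Pi.inv_apply, ENNReal.toReal_inv]
  have hkey : ∀ᵐ x ∂μ, 1 - w x ≤ llr μ ν x ∧ (llr μ ν x = 1 - w x → (μ.rnDeriv ν x).toReal = 1) := by
    filter_upwards [hpos, hinv] with x h1 h2
    have hixpos : 0 < ((μ.rnDeriv ν x).toReal)⁻¹ := inv_pos.2 h1
    have hle : Real.log (((μ.rnDeriv ν x).toReal)⁻¹) ≤ ((μ.rnDeriv ν x).toReal)⁻¹ - 1 :=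
      Real.log_le_sub_one_of_pos hixpos
    rw [Real.log_inv] at hle
    constructor
    · rw [h2]; unfold llr; linarith
    · intro heq
      by_contra hne
      have : Real.log (((μ.rnDeriv ν x).toReal)⁻¹) < ((μ.rnDeriv ν x).toReal)⁻¹ - 1 :=
        Real.log_lt_sub_one_of_pos hixpos (by simpa using inv_ne_one.mpr hne)
      rw [Real.log_inv] at this
      rw [h2] at heq
      unfold llr at heq
      linarith
  have h1w : Integrable (fun x => 1 - w x) μ := (integrable_const 1).sub hw_int
  have hlow : ∫ x, (1 - w x) ∂μ ≤ ∫ x, llr μ ν x ∂μ :=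
    integral_mono_ae h1w hint (hkey.mono fun x h => h.1)
  have hlow' : 1 - ∫ x, w x ∂μ ≤ ∫ x, llr μ ν x ∂μ := by
    rwa [integral_sub (integrable_const 1) hw_int, integral_const, probReal_univ,
      smul_eq_mul, one_mul] at hlow
  have hnn : 0 ≤ ∫ x, llr μ ν x ∂μ := le_trans (by linarith) hlow'
  refine ⟨hnn, ?_, ?_⟩
  · -- equality implies μ = ν
    intro h0
    have hsub_int : Integrable (fun x => llr μ ν x - (1 - w x)) μ := hint.sub h1w
    have hdiff : ∫ x, (llr μ ν x - (1 - w x)) ∂μ = 0 := by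
      rw [integral_sub hint h1w, h0]
      rw [integral_sub (integrable_const 1) hw_int, integral_const, probReal_univ,
        smul_eq_mul, one_mul]
      linarith [hw_integral_le, hlow', h0 ▸ hnn]
    have hnonneg : 0 ≤ᵐ[μ] fun x => llr μ ν x - (1 - w x) := by
      filter_upwards [hkey] with x h
      simpa [sub_nonneg] using h.1
    have hae0 : (fun x => llr μ ν x - (1 - w x)) =ᵐ[μ] 0 :=
      (integral_eq_zero_iff_of_nonneg_ae hnonneg hsub_int).mp hdiff
    -- so rnDeriv = 1 μ-a.e.
    have h1ae : ∀ᵐ x ∂μ, μ.rnDeriv ν x = 1 := by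
      filter_upwards [hae0, hkey, hμν.ae_le (Measure.rnDeriv_lt_top μ ν)] with x h1 h2 h3
      have : (μ.rnDeriv ν x).toReal = 1 := h2.2 (by simpa [sub_eq_zero] using h1)
      rwa [ENNReal.toReal_eq_one_iff] at this
    -- transfer to ν-a.e.
    have hs : MeasurableSet {x | μ.rnDeriv ν x ≠ 1} :=
      ((Measure.measurable_rnDeriv μ ν) (measurableSet_singleton 1)).compl
    have hμs : μ {x | μ.rnDeriv ν x ≠ 1} = 0 := ae_iff.mp h1ae
    have hslint : ∫⁻ x in {x | μ.rnDeriv ν x ≠ 1}, μ.rnDeriv ν x ∂ν = 0 := by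
      rw [Measure.setLIntegral_rnDeriv hμν]; exact hμs
    have hzero_on : ∀ᵐ x ∂(ν.restrict {x | μ.rnDeriv ν x ≠ 1}), μ.rnDeriv ν x = 0 := by
      have := (lintegral_eq_zero_iff (Measure.measurable_rnDeriv μ ν)).mp hslint
      filter_upwards [this] with x hx using hx
    have hzero_on' : ∀ᵐ x ∂ν, x ∈ {x | μ.rnDeriv ν x ≠ 1} → μ.rnDeriv ν x = 0 :=
      (ae_restrict_iff' hs).mp hzero_on
    -- ν-a.e., rnDeriv ∈ {0, 1}
    have h01 : ∀ᵐ x ∂ν, μ.rnDeriv ν x = Set.indicator {x | μ.rnDeriv ν x = 1} 1 x := by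
      filter_upwards [hzero_on'] with x hx
      by_cases h : μ.rnDeriv ν x = 1
      · simp [Set.indicator_of_mem, h]
      · simp [Set.indicator_of_notMem, h, hx h]
    have hmeas1 : MeasurableSet {x | μ.rnDeriv ν x = 1} :=
      (Measure.measurable_rnDeriv μ ν) (measurableSet_singleton 1)
    have hν1 : ν {x | μ.rnDeriv ν x = 1} = 1 := by
      have : ∫⁻ x, μ.rnDeriv ν x ∂ν = 1 := by
        rw [Measure.lintegral_rnDeriv hμν]; exact measure_univ
      rw [lintegral_congr_ae h01] at this
      rwa [lintegral_indicator_one hmeas1] at this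
    have : μ.rnDeriv ν =ᵐ[ν] 1 := by
      have hcompl : ν {x | μ.rnDeriv ν x = 1}ᶜ = 0 := by
        have := measure_compl hmeas1 (measure_ne_top ν _)
        rw [hν1, measure_univ] at this
        simpa using this
      rw [Filter.EventuallyEq, ae_iff]
      refine measure_mono_null ?_ hcompl
      intro x hx
      simpa using hx
    exact (Measure.rnDeriv_eq_one_iff_eq hμν).mp this
  · -- μ = ν implies integral zero
    intro h
    subst h
    have : llr μ μ =ᵐ[μ] 0 := by
      filter_upwards [μ.rnDeriv_self] with x hx
      simp [llr, hx]
    rw [integral_congr_ae this]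
    simp

/-- Gibbs variational principle:
`log ∫ e^φ dμ₀ + Ent_{μ₀}(μ) ≥ ∫ φ dμ`, with equality iff `μ = e^φ μ₀ / ∫ e^φ dμ₀`. -/
theorem statement17 {X : Type*} [MeasurableSpace X] (μ₀ μ : Measure X)
    [IsProbabilityMeasure μ₀] [IsProbabilityMeasure μ]
    (φ : X → ℝ) (hφm : Measurable φ) (hφb : ∃ C : ℝ, ∀ x, |φ x| ≤ C) :
    ((∫ x, φ x ∂μ : ℝ) : EReal) ≤
        ((Real.log (∫ x, Real.exp (φ x) ∂μ₀) : ℝ) : EReal) + Ent μ₀ μ ∧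
      (((Real.log (∫ x, Real.exp (φ x) ∂μ₀) : ℝ) : EReal) + Ent μ₀ μ =
          ((∫ x, φ x ∂μ : ℝ) : EReal) ↔
        μ = μ₀.withDensity fun x =>
          ENNReal.ofReal (Real.exp (φ x) / ∫ t, Real.exp (φ t) ∂μ₀)) := by
  obtain ⟨C, hC⟩ := hφb
  have hexp_int : Integrable (fun x => Real.exp (φ x)) μ₀ := by
    refine Integrable.mono' (integrable_const (Real.exp C)) hφm.exp.aestronglyMeasurable ?_
    filter_upwards with x
    rw [Real.norm_eq_abs, abs_of_pos (Real.exp_pos _)]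
    exact Real.exp_le_exp.mpr ((abs_le.mp (hC x)).2)
  have hφ_int : Integrable φ μ := by
    refine Integrable.mono' (integrable_const C) hφm.aestronglyMeasurable ?_
    filter_upwards with x using hC x
  set Z := ∫ x, Real.exp (φ x) ∂μ₀ with hZ
  set ν := μ₀.tilted φ with hν
  have htilted_eq : ν = μ₀.withDensity (fun x => ENNReal.ofReal (Real.exp (φ x) / Z)) := rfl
  rw [← htilted_eq]
  haveI hνprob : IsProbabilityMeasure ν := isProbabilityMeasure_tilted hexp_int
  have hν_ac : ν ≪ μ₀ := tilted_absolutelyContinuous μ₀ φ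
  have hac' : μ₀ ≪ ν := absolutelyContinuous_tilted hexp_int
  -- Integrability of llr in the tilted case
  have hllr_tilted : Integrable (llr ν μ₀) ν := by
    have h1 : (llr ν μ₀) =ᵐ[ν] fun x => φ x - Real.log Z :=
      hν_ac.ae_le (log_rnDeriv_tilted_left_self hexp_int)
    refine (integrable_congr h1.symm).mp ?_
    have hφν : Integrable φ ν := by
      refine Integrable.mono' (integrable_const C) hφm.aestronglyMeasurable ?_
      filter_upwards with x using hC x
    exact hφν.sub (integrable_const _)
  by_cases hcase : μ ≪ μ₀ ∧ Integrable (fun x => Real.log ((μ.rnDeriv μ₀ x).toReal)) μ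
  · obtain ⟨hac, hint⟩ := hcase
    have hint : Integrable (llr μ μ₀) μ := hint
    have hEnt : Ent μ₀ μ = ((∫ x, llr μ μ₀ x ∂μ : ℝ) : EReal) := by
      unfold Ent
      rw [if_pos ⟨hac, hint⟩]
      rfl
    have hμν : μ ≪ ν := hac.trans hac'
    have hint' : Integrable (llr μ ν) μ := integrable_llr_tilted_right hac hφ_int hint hexp_int
    have hEq : ∫ x, llr μ ν x ∂μ = ∫ x, llr μ μ₀ x ∂μ - ∫ x, φ x ∂μ + Real.log Z :=
      integral_llr_tilted_right hac hφ_int hexp_int hint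
    obtain ⟨hge, hiff⟩ := gibbs_key μ ν hμν hint'
    rw [hEq] at hge hiff
    constructor
    · rw [hEnt, ← EReal.coe_add, EReal.coe_le_coe_iff]
      linarith
    · rw [hEnt, ← EReal.coe_add, EReal.coe_eq_coe_iff]
      constructor
      · intro h
        exact hiff.mp (by linarith)
      · intro h
        have := hiff.mpr h
        linarith
  · have hEnt : Ent μ₀ μ = ⊤ := by
      unfold Ent
      rw [if_neg hcase]
    rw [hEnt]
    constructor
    · rw [EReal.coe_add_top]
      exact le_top
    · rw [EReal.coe_add_top]
      constructor
      · intro h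
        exact absurd h (EReal.top_ne_coe _)
      · intro h
        exfalso
        apply hcase
        rw [h]
        exact ⟨hν_ac, hllr_tilted⟩
end
end
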